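/- arXiv:2203.15079 — 2 statements merged into one kernel-verified Lean document; each statement's English description precedes it below -/
import Mathlib

section
/- Let G be a ribbon graph with an edge f between vertices c and s, and let T be a spanning tree. During the execution of the single-chip rotor-routing algorithm with input spanning tree T, chip at c, and sink s, no rotor makes more than one full turn and no edge is crossed by the chip more than once in each direction. -/
open Finset

noncomputable section
open scoped Classical

/-- A finite multigraph without loops: each edge has an unordered pair of
distinct endpoints. -/
structure Multigraph (V E : Type) where
  ends : E → Sym2 V
  loopless : ∀ e, ¬ (ends e).IsDiag

/-- A ribbon structure: for each vertex, a "next edge" map describing the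
cyclic ordering of the edges incident to that vertex. -/
structure RibbonStruct (V E : Type) where
  next : V → E → E

/-- The group of degree-zero divisors on the vertex set `V`. -/
def Div0 (V : Type) [Fintype V] : AddSubgroup (V → ℤ) where
  carrier := {D | ∑ v, D v = 0}
  add_mem' := by
    intro a b ha hb
    simp only [Set.mem_setOf_eq, Pi.add_apply, Finset.sum_add_distrib] at *
    omega
  zero_mem' := by simp
  neg_mem' := by
    intro a ha
    simp only [Set.mem_setOf_eq, Pi.neg_apply, Finset.sum_neg_distrib] at *
    omega

/-- The divisor `c - s`. -/
def chipDiv {V : Type} [DecidableEq V] (c s : V) : V → ℤ :=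
  fun v => (if v = c then 1 else 0) - (if v = s then 1 else 0)

namespace Multigraph

variable {V E : Type} [Fintype V] [Fintype E] [DecidableEq V] [DecidableEq E]

/-- Two vertices are adjacent if they are the two endpoints of some edge. -/
def Adj (G : Multigraph V E) (x y : V) : Prop := ∃ e : E, G.ends e = s(x, y)

/-- A multigraph is connected if any two vertices are joined by a walk. -/
def Connected (G : Multigraph V E) : Prop := ∀ x y : V, Relation.ReflTransGen G.Adj x y

/-- Adjacency using only edges from the set `T`. -/
def AdjOn (G : Multigraph V E) (T : Finset E) (x y : V) : Prop := ∃ e ∈ T, G.ends e = s(x, y)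

/-- Reachability using only edges from the set `T`. -/
def ReachOn (G : Multigraph V E) (T : Finset E) (x y : V) : Prop :=
  Relation.ReflTransGen (G.AdjOn T) x y

/-- A spanning tree: a spanning connected edge set of the correct cardinality. -/
def IsSpanningTree (G : Multigraph V E) (T : Finset E) : Prop :=
  (∀ x y : V, G.ReachOn T x y) ∧ T.card = Fintype.card V - 1

/-- The degree of a vertex: the number of incident edges. -/
def degree (G : Multigraph V E) (v : V) : ℕ := (univ.filter fun e => v ∈ G.ends e).card

/-- The number of edges of `T` incident to `v`. -/
def treeDegree (G : Multigraph V E) (T : Finset E) (v : V) : ℕ :=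
  (T.filter fun e => v ∈ G.ends e).card

/-- A leaf vertex of `T`: incident to exactly one edge of `T`. -/
def IsLeafVertex (G : Multigraph V E) (T : Finset E) (v : V) : Prop := G.treeDegree T v = 1

/-- A leaf edge of `T`: an edge of `T` incident to a leaf vertex. -/
def IsLeafEdge (G : Multigraph V E) (T : Finset E) (e : E) : Prop :=
  e ∈ T ∧ ∃ v, v ∈ G.ends e ∧ G.IsLeafVertex T v

/-- Adjacency within `T` avoiding the vertex `x`. -/
def AdjOnAvoid (G : Multigraph V E) (T : Finset E) (x : V) (a b : V) : Prop :=
  G.AdjOn T a b ∧ a ≠ x ∧ b ≠ x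

/-- "The path in `T` from `a` to `r` passes through `y`": `a` cannot reach `r`
within `T` while avoiding the vertex `y`. -/
def PathThrough (G : Multigraph V E) (T : Finset E) (r a y : V) : Prop :=
  ¬ Relation.ReflTransGen (G.AdjOnAvoid T y) a r

/-- Adjacency in `G` avoiding the vertex `x`. -/
def AdjAvoid (G : Multigraph V E) (x : V) (a b : V) : Prop := G.Adj a b ∧ a ≠ x ∧ b ≠ x

/-- 2-connected: connected and with no cut vertices. -/
def TwoConnected (G : Multigraph V E) : Prop :=
  G.Connected ∧ ∀ x a b : V, a ≠ x → b ≠ x →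
    Relation.ReflTransGen (G.AdjAvoid x) a b

/-- The row of the Laplacian matrix of `G` corresponding to the vertex `v`
(the divisor obtained by "firing" the vertex `v`, negated). -/
def lapRow (G : Multigraph V E) (v : V) : V → ℤ := fun w =>
  if w = v then (G.degree v : ℤ) else -((univ.filter fun e => G.ends e = s(v, w)).card : ℤ)

/-- The subgroup of divisors generated by the rows of the Laplacian, i.e. the
integer image of the Laplacian. -/
def LapSubgroup (G : Multigraph V E) : AddSubgroup (V → ℤ) :=
  AddSubgroup.closure (Set.range G.lapRow)

/-- Two divisors are firing equivalent when their difference lies in the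
integer image of the Laplacian. -/
def FiringEquiv (G : Multigraph V E) (D D' : V → ℤ) : Prop := D - D' ∈ G.LapSubgroup

/-- The sandpile group (Picard group) `Pic⁰(G)`:
degree-zero divisors modulo the image of the Laplacian. -/
def Pic0 (G : Multigraph V E) : Type :=
  Div0 V ⧸ ((G.LapSubgroup).addSubgroupOf (Div0 V))

instance (G : Multigraph V E) : AddCommGroup G.Pic0 :=
  QuotientAddGroup.Quotient.addCommGroup _

/-- The class in `Pic⁰(G)` of a degree-zero divisor. -/
def picClass (G : Multigraph V E) (D : V → ℤ) (hD : D ∈ Div0 V) : G.Pic0 :=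
  QuotientAddGroup.mk ⟨D, hD⟩

/-- `cfg` is the rotor configuration of the tree `T` with sink `s` (each
non-sink vertex carries the first edge of `T` on its path to `s`). -/
def IsRotorCfg (G : Multigraph V E) (s : V) (T : Finset E) (cfg : V → E) : Prop :=
  ∀ v, v ≠ s → cfg v ∈ T ∧ v ∈ G.ends (cfg v) ∧ ¬ G.ReachOn (T.erase (cfg v)) v s

/-- One step along the rotors of `cfg` (with sink `s`):
from `a ≠ s` across the rotor at `a` to its other endpoint `b`. -/
def RotorStep (G : Multigraph V E) (s : V) (cfg : V → E) (a b : V) : Prop :=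
  a ≠ s ∧ G.ends (cfg a) = s(a, b)

/-- A rotor configuration is acyclic: following rotors never returns to a
starting vertex. -/
def RotorAcyclic (G : Multigraph V E) (s : V) (cfg : V → E) : Prop :=
  ∀ a : V, ¬ Relation.TransGen (G.RotorStep s cfg) a a

/-- One step of the single-chip rotor-routing process: the state is a pair
(rotor configuration, chip position); the rotor at the chip's position is
rotated one step in the cyclic order `χ`, and the chip then moves across the
new rotor. -/
def RRStep (G : Multigraph V E) (χ : RibbonStruct V E) (p q : (V → E) × V) : Prop :=
  q.1 = Function.update p.1 p.2 (χ.next p.2 (p.1 p.2)) ∧ G.ends (q.1 p.2) = s(p.2, q.2)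

/-- A run of length `n` of the rotor-routing algorithm with sink `s`. -/
def IsRun (G : Multigraph V E) (χ : RibbonStruct V E) (s : V)
    (σ : ℕ → (V → E) × V) (n : ℕ) : Prop :=
  ∀ i, i < n → (σ i).2 ≠ s ∧ G.RRStep χ (σ i) (σ i.succ)

/-- At step `i` of the run `σ`, the chip crosses the edge `e` from `u` to `w`. -/
def Crosses (G : Multigraph V E) (σ : ℕ → (V → E) × V) (i : ℕ) (e : E) (u w : V) : Prop :=
  (σ i).2 = u ∧ (σ (i + 1)).2 = w ∧ (σ (i + 1)).1 u = e ∧ G.ends e = s(u, w)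

/-- A dart of `G`: an edge together with a chosen head. -/
def Dart (G : Multigraph V E) : Type := {p : E × V // p.2 ∈ G.ends p.1}

/-- The "next dart along a face" relation determined by the ribbon structure. -/
def FaceRel (G : Multigraph V E) (χ : RibbonStruct V E) (a b : G.Dart) : Prop :=
  b.1.1 = χ.next a.1.2 a.1.1 ∧ G.ends b.1.1 = s(a.1.2, b.1.2)

/-- The number of faces of the ribbon graph `(G, χ)`: the number of orbits of
the face map on darts. -/
def numFaces (G : Multigraph V E) (χ : RibbonStruct V E) : ℕ :=
  Nat.card (Quot (G.FaceRel χ))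

end Multigraph

/-- The axioms making `χ` an honest ribbon structure on `G`: at each vertex,
`next` is a bijection preserving the incident edges and acting transitively
(i.e. cyclically) on them. -/
def RibbonStruct.IsRibbon {V E : Type} [Fintype V] [Fintype E]
    (χ : RibbonStruct V E) (G : Multigraph V E) : Prop :=
  (∀ v : V, Function.Bijective (χ.next v)) ∧
  (∀ v e, v ∈ G.ends e → v ∈ G.ends (χ.next v e)) ∧
  (∀ v e f, v ∈ G.ends e → v ∈ G.ends f → ∃ m : ℕ, (χ.next v)^[m] e = f)

/-- A plane graph: a connected ribbon graph of genus 0 (Euler's formula). -/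
def Multigraph.IsPlane {V E : Type} [Fintype V] [Fintype E] [DecidableEq V] [DecidableEq E]
    (G : Multigraph V E) (χ : RibbonStruct V E) : Prop :=
  G.Connected ∧ χ.IsRibbon G ∧
    Fintype.card V + G.numFaces χ = Fintype.card E + 2

/-- An isomorphism of ribbon graphs: a pair of bijections on vertices and
edges preserving incidence and the cyclic orderings. -/
def IsRibbonIso {V E V' E' : Type}
    (G : Multigraph V E) (χ : RibbonStruct V E)
    (G' : Multigraph V' E') (χ' : RibbonStruct V' E')
    (φV : V ≃ V') (φE : E ≃ E') : Prop :=
  (∀ e, G'.ends (φE e) = (G.ends e).map φV) ∧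
  ∀ v e, v ∈ G.ends e → φE (χ.next v e) = χ'.next (φV v) (φE e)


section AuxNoOverspins

variable {V E : Type} [Fintype V] [Fintype E] [DecidableEq V] [DecidableEq E]

/-- Number of times the chip is at `u` among times `< i`. -/
def fireCnt (σ : ℕ → (V → E) × V) (u : V) (i : ℕ) : ℕ :=
  ((Finset.range i).filter fun j => (σ j).2 = u).card

lemma aux_iter_mem {G : Multigraph V E} {χ : RibbonStruct V E} (hrib : χ.IsRibbon G)
    {u : V} {e : E} (he : u ∈ G.ends e) (m : ℕ) : u ∈ G.ends ((χ.next u)^[m] e) := by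
  induction m with
  | zero => exact he
  | succ k ih => rw [Function.iterate_succ_apply']; exact hrib.2.1 u _ ih

lemma aux_iter_mod {χ : RibbonStruct V E} {u : V} {e : E} {d : ℕ} (hd : 0 < d)
    (hcyc : (χ.next u)^[d] e = e) (m : ℕ) :
    (χ.next u)^[m] e = (χ.next u)^[m % d] e := by
  induction m using Nat.strong_induction_on with
  | _ m ih =>
    by_cases h : m < d
    · rw [Nat.mod_eq_of_lt h]
    · push_neg at h
      have hmd : m - d + d = m := Nat.sub_add_cancel h
      have h1 : (χ.next u)^[m] e = (χ.next u)^[m - d] ((χ.next u)^[d] e) := by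
        rw [← Function.iterate_add_apply, hmd]
      rw [h1, hcyc, ih (m - d) (by omega), Nat.mod_eq_sub_mod h]

/-- Iterates `1..deg u` of the next map on an incident edge are pairwise distinct. -/
lemma aux_iter_inj {G : Multigraph V E} {χ : RibbonStruct V E} (hrib : χ.IsRibbon G)
    {u : V} {e : E} (he : u ∈ G.ends e) {a b : ℕ} (ha : 1 ≤ a) (hab : a < b)
    (hb : b ≤ G.degree u) : (χ.next u)^[a] e ≠ (χ.next u)^[b] e := by
  intro heq
  set d := b - a with hd
  have hd0 : 0 < d := by omega
  set e' := (χ.next u)^[a] e with he'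
  have hcyc : (χ.next u)^[d] e' = e' := by
    rw [he', ← Function.iterate_add_apply]
    have hda : d + a = b := by omega
    rw [hda, ← heq]
  have he'mem : u ∈ G.ends e' := aux_iter_mem hrib he a
  have hsub : (univ.filter fun g => u ∈ G.ends g) ⊆
      (Finset.range d).image (fun m => (χ.next u)^[m] e') := by
    intro g hg
    simp only [mem_filter] at hg
    obtain ⟨m, hm⟩ := hrib.2.2 u e' g he'mem hg.2
    refine Finset.mem_image.2 ⟨m % d, Finset.mem_range.2 (Nat.mod_lt _ hd0), ?_⟩
    rw [← aux_iter_mod hd0 hcyc m, hm]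
  have h1 := Finset.card_le_card hsub
  have h2 := Finset.card_image_le (s := Finset.range d) (f := fun m => (χ.next u)^[m] e')
  rw [Finset.card_range] at h2
  have hdeg : G.degree u ≤ d := le_trans h1 h2
  omega

/-- The rotor at `u` at time `i` is the `fireCnt`-th iterate of the initial rotor. -/
lemma aux_rotor_eq {G : Multigraph V E} {χ : RibbonStruct V E} {s : V}
    {σ : ℕ → (V → E) × V} {cfg0 : V → E} {c : V} (hσ0 : σ 0 = (cfg0, c))
    {n : ℕ} (hrun : G.IsRun χ s σ n) :
    ∀ i ≤ n, ∀ u, (σ i).1 u = (χ.next u)^[fireCnt σ u i] (cfg0 u) := by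
  intro i
  induction i with
  | zero => intro _ u; simp [fireCnt, hσ0]
  | succ k ih =>
    intro hk u
    have hk' : k < n := hk
    obtain ⟨hupd, _⟩ := (hrun k hk').2
    rw [hupd]
    by_cases h : (σ k).2 = u
    · have hcnt : fireCnt σ u (k + 1) = fireCnt σ u k + 1 := by
        unfold fireCnt
        rw [Finset.range_add_one, Finset.filter_insert, if_pos h,
          Finset.card_insert_of_notMem (by simp)]
      rw [h, Function.update_self, hcnt, Function.iterate_succ_apply',
        ih (le_of_lt hk') u]
    · have hcnt : fireCnt σ u (k + 1) = fireCnt σ u k := by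
        unfold fireCnt
        rw [Finset.range_add_one, Finset.filter_insert, if_neg h]
      rw [Function.update_of_ne (fun hh => h hh.symm), hcnt, ih (le_of_lt hk') u]

end AuxNoOverspins

/-- during a run of the single-chip rotor-routing algorithm with
chip `c` and sink `s`, where `c` and `s` are joined by an edge `f`, no rotor
makes more than one full turn (the chip leaves each vertex at most its degree
many times) and no edge is crossed more than once in each direction. -/
theorem no_overspins
    {V E : Type} [Fintype V] [Fintype E] [DecidableEq V] [DecidableEq E]
    (G : Multigraph V E) (χ : RibbonStruct V E) (hrib : χ.IsRibbon G)
    (hG : G.Connected) (c s : V) (f : E) (hf : G.ends f = s(c, s))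
    (T : Finset E) (hT : G.IsSpanningTree T)
    (cfg0 : V → E) (h0 : G.IsRotorCfg s T cfg0)
    (σ : ℕ → (V → E) × V) (hσ0 : σ 0 = (cfg0, c))
    (n : ℕ) (hrun : G.IsRun χ s σ n) :
    (∀ v : V, ((Finset.range n).filter fun i => (σ i).2 = v).card ≤ G.degree v) ∧
    (∀ (e : E) (u w : V), G.ends e = s(u, w) →
      ((Finset.range n).filter fun i => G.Crosses σ i e u w).card ≤ 1) := by
  have key : ∀ v : V, ((Finset.range n).filter fun i => (σ i).2 = v).card ≤ G.degree v := by
    by_contra hcon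
    push_neg at hcon
    obtain ⟨v₀, hv₀⟩ := hcon
    -- the set of "overfire" times
    set B := (Finset.range n).filter (fun t => G.degree ((σ t).2) <
      ((Finset.range (t + 1)).filter fun j => (σ j).2 = (σ t).2).card) with hBdef
    have hBne : B.Nonempty := by
      have hFne : ((Finset.range n).filter fun i => (σ i).2 = v₀).Nonempty := by
        rw [← Finset.card_pos]; omega
      set t₀ := ((Finset.range n).filter fun i => (σ i).2 = v₀).max' hFne with ht₀
      have ht₀mem := ((Finset.range n).filter fun i => (σ i).2 = v₀).max'_mem hFne
      rw [← ht₀] at ht₀mem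
      simp only [mem_filter, Finset.mem_range] at ht₀mem
      refine ⟨t₀, ?_⟩
      simp only [hBdef, mem_filter, Finset.mem_range]
      refine ⟨ht₀mem.1, ?_⟩
      have hsub : ((Finset.range n).filter fun i => (σ i).2 = v₀) ⊆
          ((Finset.range (t₀ + 1)).filter fun j => (σ j).2 = v₀) := by
        intro j hj
        have hle := Finset.le_max' _ j hj
        rw [← ht₀] at hle
        simp only [mem_filter, Finset.mem_range] at hj ⊢
        exact ⟨by omega, hj.2⟩
      have := Finset.card_le_card hsub
      rw [ht₀mem.2]
      omega
    set t := B.min' hBne with ht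
    have htB : t ∈ B := B.min'_mem hBne
    simp only [hBdef, mem_filter, Finset.mem_range] at htB
    obtain ⟨htn, htbig⟩ := htB
    set v := (σ t).2 with hv
    have hvs : v ≠ s := (hrun t htn).1
    -- minimality: no overfire strictly before t
    have hmin : ∀ i, i < t →
        ((Finset.range (i + 1)).filter fun j => (σ j).2 = (σ i).2).card ≤
          G.degree ((σ i).2) := by
      intro i hi
      by_contra hcc
      push_neg at hcc
      have : i ∈ B := by
        simp only [hBdef, mem_filter, Finset.mem_range]
        exact ⟨by omega, hcc⟩
      have := B.min'_le i this
      omega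
    -- entries into v before time t
    set Entries := (Finset.range t).filter (fun i => (σ (i + 1)).2 = v) with hEdef
    -- core distinctness of entry edges
    have hcore : ∀ i ∈ Entries, ∀ i' ∈ Entries, i < i' →
        (σ (i + 1)).1 ((σ i).2) ≠ (σ (i' + 1)).1 ((σ i').2) := by
      intro i hi i' hi' hii heq
      simp only [hEdef, mem_filter, Finset.mem_range] at hi hi'
      have hin : i < n := by omega
      have hi'n : i' < n := by omega
      have hus := (hrun i hin).1
      have hstep := (hrun i hin).2.2
      have hu's : (σ i').2 ≠ s := (hrun i' hi'n).1
      have hends : G.ends ((σ (i + 1)).1 ((σ i).2)) = s((σ i).2, v) := by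
        rw [hstep, hi.2]
      have hends' : G.ends ((σ (i' + 1)).1 ((σ i').2)) = s((σ i').2, v) := by
        rw [(hrun i' hi'n).2.2, hi'.2]
      rw [heq, hends'] at hends
      have huu : (σ i').2 = (σ i).2 := by
        have hl := G.loopless ((σ (i' + 1)).1 ((σ i').2))
        rw [hends', Sym2.mk_isDiag_iff] at hl
        rcases Sym2.eq_iff.1 hends with ⟨h1, _⟩ | ⟨h1, h2⟩
        · exact h1
        · exact absurd h1 hl
      set u := (σ i).2 with hu
      -- rotor values
      have hr1 := aux_rotor_eq hσ0 hrun (i + 1) (by omega) u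
      have hr2 := aux_rotor_eq hσ0 hrun (i' + 1) (by omega) u
      rw [huu] at heq
      rw [hr1, hr2] at heq
      have ha1 : 1 ≤ fireCnt σ u (i + 1) := by
        unfold fireCnt
        rw [Finset.one_le_card]
        exact ⟨i, by simp [fireCnt, hu]⟩
      have hab : fireCnt σ u (i + 1) < fireCnt σ u (i' + 1) := by
        have hsub : insert i' ((Finset.range (i + 1)).filter fun j => (σ j).2 = u) ⊆
            (Finset.range (i' + 1)).filter fun j => (σ j).2 = u := by
          intro j hj
          rcases Finset.mem_insert.1 hj with rfl | hj
          · simp only [mem_filter, Finset.mem_range]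
            exact ⟨by omega, huu⟩
          · simp only [mem_filter, Finset.mem_range] at hj ⊢
            exact ⟨by omega, hj.2⟩
        have hni : i' ∉ (Finset.range (i + 1)).filter fun j => (σ j).2 = u := by
          simp only [mem_filter, Finset.mem_range]
          omega
        have := Finset.card_le_card hsub
        rw [Finset.card_insert_of_notMem hni] at this
        unfold fireCnt
        omega
      have hb : fireCnt σ u (i' + 1) ≤ G.degree u := by
        have := hmin i' (by omega)
        rw [huu] at this
        exact this
      exact aux_iter_inj hrib (h0 u hus).2.1 ha1 hab hb heq
    -- the target finset of possible entry edges
    set A := univ.filter (fun e : E => v ∈ G.ends e ∧ s ∉ G.ends e) with hAdef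
    have hEA : Entries.card ≤ A.card := by
      apply Finset.card_le_card_of_injOn (fun i => (σ (i + 1)).1 ((σ i).2))
      · intro i hi
        have hi2 := hi
        simp only [hEdef, Finset.mem_coe, mem_filter, Finset.mem_range] at hi2
        have hin : i < n := by omega
        have hends : G.ends ((σ (i + 1)).1 ((σ i).2)) = s((σ i).2, v) := by
          rw [(hrun i hin).2.2, hi2.2]
        simp only [hAdef, Finset.mem_coe, mem_filter, Finset.mem_univ, true_and]
        constructor
        · rw [hends, Sym2.mem_iff]; right; rfl
        · rw [hends, Sym2.mem_iff]
          push_neg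
          exact ⟨fun hh => (hrun i hin).1 hh.symm, fun hh => hvs hh.symm⟩
      · intro i hi i' hi' heq
        rcases lt_trichotomy i i' with h | h | h
        · exact absurd heq (hcore i hi i' hi' h)
        · exact h
        · exact absurd heq.symm (hcore i' hi' i hi h)
    -- lower bound: fires of v up to time t ≤ entries + (v = c)
    have hlow : ((Finset.range (t + 1)).filter fun j => (σ j).2 = v).card ≤
        Entries.card + (if v = c then 1 else 0) := by
      set Fv := (Finset.range (t + 1)).filter fun j => (σ j).2 = v with hFvdef
      have hinj : ∀ S : Finset ℕ, S ⊆ Fv → (0 ∉ S) → S.card ≤ Entries.card := by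
        intro S hS h0S
        apply Finset.card_le_card_of_injOn (fun j => j - 1)
        · intro j hj
          have hjF := hS hj
          simp only [hFvdef, mem_filter, Finset.mem_range] at hjF
          have hj0 : j ≠ 0 := fun hh => h0S (hh ▸ hj)
          simp only [hEdef, Finset.mem_coe, mem_filter, Finset.mem_range]
          constructor
          · omega
          · have : j - 1 + 1 = j := by omega
            rw [this]; exact hjF.2
        · intro j hj j' hj' hpe
          have h1 : j ≠ 0 := fun hh => h0S (hh ▸ hj)
          have h2 : j' ≠ 0 := fun hh => h0S (hh ▸ hj')
          simp only at hpe
          omega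
      by_cases hvc : v = c
      · rw [if_pos hvc]
        have hsub : Fv ⊆ insert 0 (Fv.erase 0) := by
          intro j hj
          by_cases hj0 : j = 0
          · rw [hj0]; exact Finset.mem_insert_self _ _
          · exact Finset.mem_insert_of_mem (Finset.mem_erase.2 ⟨hj0, hj⟩)
        have h1 := Finset.card_le_card hsub
        have h2 := Finset.card_insert_le 0 (Fv.erase 0)
        have h3 := hinj (Fv.erase 0) (Finset.erase_subset _ _)
          (Finset.notMem_erase _ _)
        omega
      · rw [if_neg hvc]
        apply hinj Fv (le_refl _)
        intro h0F
        simp only [hFvdef, mem_filter] at h0F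
        rw [hσ0] at h0F
        exact hvc h0F.2.symm
    -- upper bound on A
    have hAcard : A.card + (if v = c then 1 else 0) ≤ G.degree v := by
      have hAsub : A ⊆ univ.filter (fun e : E => v ∈ G.ends e) := by
        intro e he
        simp only [hAdef, mem_filter] at he ⊢
        exact ⟨he.1, he.2.1⟩
      by_cases hvc : v = c
      · rw [if_pos hvc]
        have hfmem : f ∈ univ.filter (fun e : E => v ∈ G.ends e) := by
          rw [mem_filter]
          exact ⟨Finset.mem_univ f, by rw [hf, Sym2.mem_iff]; left; exact hvc⟩
        have hfA : f ∉ A := by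
          intro hmem
          rw [hAdef, mem_filter] at hmem
          exact hmem.2.2 (by rw [hf, Sym2.mem_iff]; right; rfl)
        have hsub2 : A ⊆ (univ.filter (fun e : E => v ∈ G.ends e)).erase f := by
          intro e he
          exact Finset.mem_erase.2 ⟨fun hh => hfA (hh ▸ he), hAsub he⟩
        have h1 := Finset.card_le_card hsub2
        have h2 := Finset.card_erase_of_mem hfmem
        have h3 : 1 ≤ (univ.filter (fun e : E => v ∈ G.ends e)).card :=
          Finset.one_le_card.2 ⟨f, hfmem⟩
        unfold Multigraph.degree
        omega
      · rw [if_neg hvc]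
        simpa [Multigraph.degree] using Finset.card_le_card hAsub
    omega
  refine ⟨key, ?_⟩
  intro e u w hew
  rw [Finset.card_le_one]
  intro i hi i' hi'
  by_contra hne
  -- WLOG handled by a symmetric core argument
  have core : ∀ j j' : ℕ, j < j' → j' < n → G.Crosses σ j e u w → G.Crosses σ j' e u w →
      False := by
    intro j j' hjj hj'n hc hc'
    obtain ⟨hju, _, hje, _⟩ := hc
    obtain ⟨hj'u, _, hj'e, _⟩ := hc'
    have hjn : j < n := by omega
    have hus : u ≠ s := hju ▸ (hrun j hjn).1
    have hr1 := aux_rotor_eq hσ0 hrun (j + 1) (by omega) u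
    have hr2 := aux_rotor_eq hσ0 hrun (j' + 1) (by omega) u
    rw [hr1] at hje
    rw [hr2] at hj'e
    have ha1 : 1 ≤ fireCnt σ u (j + 1) := by
      unfold fireCnt
      rw [Finset.one_le_card]
      exact ⟨j, by simp [fireCnt, hju]⟩
    have hab : fireCnt σ u (j + 1) < fireCnt σ u (j' + 1) := by
      have hsub : insert j' ((Finset.range (j + 1)).filter fun k => (σ k).2 = u) ⊆
          (Finset.range (j' + 1)).filter fun k => (σ k).2 = u := by
        intro k hk
        rcases Finset.mem_insert.1 hk with rfl | hk
        · simp only [mem_filter, Finset.mem_range]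
          exact ⟨by omega, hj'u⟩
        · simp only [mem_filter, Finset.mem_range] at hk ⊢
          exact ⟨by omega, hk.2⟩
      have hni : j' ∉ (Finset.range (j + 1)).filter fun k => (σ k).2 = u := by
        simp only [mem_filter, Finset.mem_range]
        omega
      have := Finset.card_le_card hsub
      rw [Finset.card_insert_of_notMem hni] at this
      unfold fireCnt
      omega
    have hb : fireCnt σ u (j' + 1) ≤ G.degree u := by
      have hsub : (Finset.range (j' + 1)).filter (fun k => (σ k).2 = u) ⊆
          (Finset.range n).filter fun k => (σ k).2 = u := by
        intro k hk
        simp only [mem_filter, Finset.mem_range] at hk ⊢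
        exact ⟨by omega, hk.2⟩
      have := Finset.card_le_card hsub
      have hkey := key u
      unfold fireCnt
      omega
    exact aux_iter_inj hrib (h0 u hus).2.1 ha1 hab hb (hje.trans hj'e.symm)
  simp only [mem_filter, Finset.mem_range] at hi hi'
  rcases lt_trichotomy i i' with h | h | h
  · exact core i i' h hi'.1 hi.2 hi'.2
  · exact hne h
  · exact core i' i h hi.1 hi'.2 hi.2

end
end

section
/- Let α be a sandpile torsor algorithm on plane graphs, and define ᾱ, α⁻¹, ᾱ⁻¹ by ᾱ_{(G,χ̄)}(S,T) = α_{(G,χ)}(S,T), α⁻¹_{(G,χ)}(-S,T) = α_{(G,χ)}(S,T), and ᾱ⁻¹_{(G,χ̄)}(-S,T) = α_{(G,χ)}(S,T), where χ̄ reverses the cyclic order at each vertex. Then each of ᾱ, α⁻¹, ᾱ⁻¹ is again a sandpile torsor algorithm, and all four algorithms α, ᾱ, α⁻¹, ᾱ⁻¹ are pairwise distinct. -/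
open Finset

noncomputable section
open scoped Classical

/-- The data of a candidate sandpile torsor algorithm: for every ribbon graph
(on `Fin` types) an operation of the sandpile group on edge sets
(only its values on plane graphs and spanning trees are relevant). -/
abbrev AlgData : Type :=
  ∀ (nV nE : ℕ) (G : Multigraph (Fin nV) (Fin nE)) (χ : RibbonStruct (Fin nV) (Fin nE)),
    G.Pic0 → Finset (Fin nE) → Finset (Fin nE)

/-- A sandpile torsor algorithm on plane graphs: on every plane graph it gives
a free transitive action of `Pic⁰(G)` on spanning trees, compatibly with
ribbon graph isomorphisms. -/
def IsTorsorAlg (α : AlgData) : Prop :=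
  ∀ (nV nE : ℕ) (G : Multigraph (Fin nV) (Fin nE)) (χ : RibbonStruct (Fin nV) (Fin nE)),
    G.IsPlane χ →
    (∀ S T, G.IsSpanningTree T → G.IsSpanningTree (α nV nE G χ S T)) ∧
    (∀ T, G.IsSpanningTree T → α nV nE G χ 0 T = T) ∧
    (∀ S S' T, G.IsSpanningTree T →
      α nV nE G χ (S + S') T = α nV nE G χ S (α nV nE G χ S' T)) ∧
    (∀ S T, G.IsSpanningTree T → α nV nE G χ S T = T → S = 0) ∧
    (∀ T T', G.IsSpanningTree T → G.IsSpanningTree T' → ∃ S, α nV nE G χ S T = T') ∧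
    (∀ (nV' nE' : ℕ) (G' : Multigraph (Fin nV') (Fin nE'))
        (χ' : RibbonStruct (Fin nV') (Fin nE')), G'.IsPlane χ' →
      ∀ (φV : Fin nV ≃ Fin nV') (φE : Fin nE ≃ Fin nE'),
        IsRibbonIso G χ G' χ' φV φE →
        ∀ (D : Fin nV → ℤ) (hD : D ∈ Div0 (Fin nV))
          (hD' : (D ∘ φV.symm) ∈ Div0 (Fin nV')) (T : Finset (Fin nE)),
          G.IsSpanningTree T →
          α nV' nE' G' χ' (G'.picClass (D ∘ φV.symm) hD') (T.image φE) =
            (α nV nE G χ (G.picClass D hD) T).image φE)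

/-- The reversed ribbon structure `χ̄`: the cyclic order at each vertex is
reversed, i.e. `next` is replaced by its inverse. -/
noncomputable def RibbonStruct.reverse {V E : Type} (χ : RibbonStruct V E) :
    RibbonStruct V E :=
  ⟨fun v a => @Function.invFun E E ⟨a⟩ (χ.next v) a⟩

/-- `ᾱ`, defined by `ᾱ_{(G,χ̄)}(S,T) = α_{(G,χ)}(S,T)`. -/
noncomputable def revAlg (α : AlgData) : AlgData :=
  fun nV nE G χ S T => α nV nE G χ.reverse S T

/-- `α⁻¹`, defined by `α⁻¹_{(G,χ)}(-S,T) = α_{(G,χ)}(S,T)`. -/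
def invAlg (α : AlgData) : AlgData :=
  fun nV nE G χ S T => α nV nE G χ (-S) T

/-- `ᾱ⁻¹`, defined by `ᾱ⁻¹_{(G,χ̄)}(-S,T) = α_{(G,χ)}(S,T)`. -/
noncomputable def revInvAlg (α : AlgData) : AlgData :=
  fun nV nE G χ S T => α nV nE G χ.reverse (-S) T

/-- Two algorithms are distinct if they differ on some plane graph, some
sandpile element and some spanning tree. -/
def AlgNe (α β : AlgData) : Prop :=
  ∃ (nV nE : ℕ) (G : Multigraph (Fin nV) (Fin nE)) (χ : RibbonStruct (Fin nV) (Fin nE)),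
    G.IsPlane χ ∧ ∃ S T, G.IsSpanningTree T ∧ α nV nE G χ S T ≠ β nV nE G χ S T

def E3G : Multigraph (Fin 2) (Fin 3) := ⟨fun _ => s(0,1), by decide⟩
def E3R : RibbonStruct (Fin 2) (Fin 3) := ⟨fun v e => if v = 0 then e + 1 else e + 2⟩
def C3G : Multigraph (Fin 3) (Fin 3) := ⟨fun e => s(e, e+1), by decide⟩
def C3R : RibbonStruct (Fin 3) (Fin 3) := ⟨fun v e => if e = v then v - 1 else if e = v - 1 then v else e⟩

theorem E3_ribbon : E3R.IsRibbon E3G := by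
  refine ⟨by decide, by decide, ?_⟩
  have h : ∀ (v : Fin 2) (e f : Fin 3), ∃ m, m < 3 ∧ (E3R.next v)^[m] e = f := by decide
  intro v e f _ _
  obtain ⟨m, _, hm⟩ := h v e f
  exact ⟨m, hm⟩

theorem C3_ribbon : C3R.IsRibbon C3G := by
  refine ⟨by decide, by decide, ?_⟩
  have h : ∀ (v : Fin 3) (e f : Fin 3), v ∈ C3G.ends e → v ∈ C3G.ends f →
      ∃ m, m < 3 ∧ (C3R.next v)^[m] e = f := by decide
  intro v e f he hf
  obtain ⟨m, _, hm⟩ := h v e f he hf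
  exact ⟨m, hm⟩

example : (E3G.lapRow 0) 0 = 3 := by decide
example : chipDiv (0:Fin 2) 1 ∈ Div0 (Fin 2) := by show ∑ v, chipDiv (0:Fin 2) 1 v = 0; decide
example : chipDiv (0:Fin 3) 1 ∈ Div0 (Fin 3) := by show ∑ v, chipDiv (0:Fin 3) 1 v = 0; decide
-- involution for C3R
theorem C3R_invol : ∀ v e, C3R.next v (C3R.next v e) = e := by decide

abbrev E3D := {p : Fin 3 × Fin 2 // p.2 ∈ E3G.ends p.1}
def E3c : E3D → Fin 3 := fun d => if d.1.2 = 0 then d.1.1 else d.1.1 - 1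
def E3rep : Fin 3 → E3D := fun i => ⟨(i, 0), Sym2.mem_iff.mpr (Or.inl rfl)⟩

theorem E3_numFaces : E3G.numFaces E3R = 3 := by
  have hc : ∀ a b : E3D, (b.1.1 = E3R.next a.1.2 a.1.1 ∧ E3G.ends b.1.1 = s(a.1.2, b.1.2)) →
      E3c a = E3c b := by decide
  have e : Quot (E3G.FaceRel E3R) ≃ Fin 3 := by
    refine ⟨Quot.lift E3c (fun a b h => hc a b h), fun i => Quot.mk _ (E3rep i), ?_, ?_⟩
    · apply Quot.ind
      rintro ⟨⟨e, v⟩, h⟩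
      show Quot.mk _ (E3rep (E3c _)) = _
      fin_cases e <;> fin_cases v <;> first | rfl | exact Quot.sound ⟨rfl, rfl⟩ | exact Quot.sound ⟨by decide +revert, by decide +revert⟩
    · intro i; fin_cases i <;> rfl
  show Nat.card _ = 3
  rw [Nat.card_congr e, Nat.card_eq_fintype_card, Fintype.card_fin]

abbrev C3D := {p : Fin 3 × Fin 3 // p.2 ∈ C3G.ends p.1}
def C3c : C3D → Fin 2 := fun d => if d.1.2 = d.1.1 then 0 else 1
def C3rep : Fin 2 → C3D := fun i =>
  if i = 0 then ⟨(0, 0), Sym2.mem_iff.mpr (Or.inl rfl)⟩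
  else ⟨(0, 1), Sym2.mem_iff.mpr (Or.inr rfl)⟩

theorem C3_numFaces : C3G.numFaces C3R = 2 := by
  have hc : ∀ a b : C3D, (b.1.1 = C3R.next a.1.2 a.1.1 ∧ C3G.ends b.1.1 = s(a.1.2, b.1.2)) →
      C3c a = C3c b := by decide
  have e : Quot (C3G.FaceRel C3R) ≃ Fin 2 := by
    refine ⟨Quot.lift C3c (fun a b h => hc a b h), fun i => Quot.mk _ (C3rep i), ?_, ?_⟩
    · apply Quot.ind
      rintro ⟨⟨e, v⟩, h⟩
      show Quot.mk _ (C3rep (C3c _)) = _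
      -- cycles: (0,0)→(2,2)→(1,1)→(0,0) ; (0,1)→(1,2)→(2,0)→(0,1)
      have m00 : ((0 : Fin 3), (0 : Fin 3)).2 ∈ C3G.ends ((0 : Fin 3), (0 : Fin 3)).1 := by decide
      have s1 : Quot.mk (C3G.FaceRel C3R) (⟨((0 : Fin 3), 0), by decide⟩ : C3D) =
          Quot.mk _ (⟨((2 : Fin 3), 2), by decide⟩ : C3D) := Quot.sound ⟨rfl, Sym2.eq_swap⟩
      have s2 : Quot.mk (C3G.FaceRel C3R) (⟨((2 : Fin 3), 2), by decide⟩ : C3D) =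
          Quot.mk _ (⟨((1 : Fin 3), 1), by decide⟩ : C3D) := Quot.sound ⟨rfl, Sym2.eq_swap⟩
      have s3 : Quot.mk (C3G.FaceRel C3R) (⟨((0 : Fin 3), 1), by decide⟩ : C3D) =
          Quot.mk _ (⟨((1 : Fin 3), 2), by decide⟩ : C3D) := Quot.sound ⟨rfl, rfl⟩
      have s4 : Quot.mk (C3G.FaceRel C3R) (⟨((1 : Fin 3), 2), by decide⟩ : C3D) =
          Quot.mk _ (⟨((2 : Fin 3), 0), by decide⟩ : C3D) := Quot.sound ⟨rfl, rfl⟩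
      fin_cases e <;> fin_cases v <;>
        first
          | rfl
          | exact absurd h (by decide)
          | exact Quot.sound ⟨rfl, rfl⟩
          | exact Quot.sound ⟨rfl, Sym2.eq_swap⟩
          | exact s1.trans s2
          | exact s3.trans s4


    · intro i; fin_cases i <;> rfl
  show Nat.card _ = 2
  rw [Nat.card_congr e, Nat.card_eq_fintype_card, Fintype.card_fin]

theorem E3_plane : E3G.IsPlane E3R := by
  refine ⟨?_, E3_ribbon, by rw [E3_numFaces]; decide⟩
  have h1 : E3G.Adj 0 1 := ⟨0, rfl⟩
  have h2 : E3G.Adj 1 0 := ⟨0, Sym2.eq_swap⟩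
  intro x y; fin_cases x <;> fin_cases y
  · exact .refl
  · exact .single h1
  · exact .single h2
  · exact .refl

theorem C3_plane : C3G.IsPlane C3R := by
  refine ⟨?_, C3_ribbon, by rw [C3_numFaces]⟩
  have h01 : C3G.Adj 0 1 := ⟨0, rfl⟩
  have h10 : C3G.Adj 1 0 := ⟨0, Sym2.eq_swap⟩
  have h12 : C3G.Adj 1 2 := ⟨1, rfl⟩
  have h21 : C3G.Adj 2 1 := ⟨1, Sym2.eq_swap⟩
  intro x y; fin_cases x <;> fin_cases y
  · exact .refl
  · exact .single h01
  · exact (Relation.ReflTransGen.single h01).trans (.single h12)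
  · exact .single h10
  · exact .refl
  · exact .single h12
  · exact (Relation.ReflTransGen.single h21).trans (.single h10)
  · exact .single h21
  · exact .refl

theorem E3_tree : E3G.IsSpanningTree {0} := by
  constructor
  · have h1 : E3G.AdjOn {0} 0 1 := ⟨0, by decide, rfl⟩
    have h2 : E3G.AdjOn {0} 1 0 := ⟨0, by decide, Sym2.eq_swap⟩
    intro x y; fin_cases x <;> fin_cases y
    · exact .refl
    · exact .single h1
    · exact .single h2
    · exact .refl
  · decide

theorem C3_tree : C3G.IsSpanningTree {0, 1} := by
  constructor
  · have h01 : C3G.AdjOn {0,1} 0 1 := ⟨0, by decide, rfl⟩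
    have h10 : C3G.AdjOn {0,1} 1 0 := ⟨0, by decide, Sym2.eq_swap⟩
    have h12 : C3G.AdjOn {0,1} 1 2 := ⟨1, by decide, rfl⟩
    have h21 : C3G.AdjOn {0,1} 2 1 := ⟨1, by decide, Sym2.eq_swap⟩
    intro x y; fin_cases x <;> fin_cases y
    · exact .refl
    · exact .single h01
    · exact (Relation.ReflTransGen.single h01).trans (.single h12)
    · exact .single h10
    · exact .refl
    · exact .single h12
    · exact (Relation.ReflTransGen.single h21).trans (.single h10)
    · exact .single h21
    · exact .refl
  · decide

-- Pic0 nonvanishing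
theorem lap_dvd {n m : ℕ} (G : Multigraph (Fin n) (Fin m)) (φ : ((Fin n) → ℤ) →+ ℤ)
    (h : ∀ v, (3:ℤ) ∣ φ (G.lapRow v)) : ∀ x ∈ G.LapSubgroup, (3:ℤ) ∣ φ x := by
  intro x hx
  have hle : G.LapSubgroup ≤ AddSubgroup.comap φ (AddSubgroup.zmultiples 3) := by
    apply (AddSubgroup.closure_le _).mpr
    rintro _ ⟨v, rfl⟩
    simpa [AddSubgroup.mem_comap, Int.mem_zmultiples_iff] using h v
  simpa [AddSubgroup.mem_comap, Int.mem_zmultiples_iff] using hle hx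

def ev0 {n : ℕ} : ((Fin (n+1)) → ℤ) →+ ℤ := AddMonoidHom.mk' (fun f => f 0) (fun _ _ => rfl)
def ev01 : ((Fin 3) → ℤ) →+ ℤ := AddMonoidHom.mk' (fun f => f 0 - f 1) (fun a b => by
  simp [Pi.add_apply]; ring)

theorem E3_chip_mem : chipDiv (0:Fin 2) 1 ∈ Div0 (Fin 2) := by
  show ∑ v, chipDiv (0:Fin 2) 1 v = 0; decide

theorem C3_chip_mem : chipDiv (0:Fin 3) 1 ∈ Div0 (Fin 3) := by
  show ∑ v, chipDiv (0:Fin 3) 1 v = 0; decide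

theorem E3_notlap : (chipDiv (0:Fin 2) 1 + chipDiv (0:Fin 2) 1) ∉ E3G.LapSubgroup := by
  intro hmem
  have := lap_dvd E3G ev0 (by decide) _ hmem
  revert this; decide

theorem C3_notlap : (chipDiv (0:Fin 3) 1 + chipDiv (0:Fin 3) 1) ∉ C3G.LapSubgroup := by
  intro hmem
  have := lap_dvd C3G ev01 (by decide) _ hmem
  revert this; decide

section Reverse
variable {V E : Type} [Fintype V] [Fintype E] [DecidableEq V] [DecidableEq E]

theorem reverse_next_eq (χ : RibbonStruct V E) {v : V}
    (hinj : Function.Injective (χ.next v)) {x e : E} (h : χ.next v x = e) :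
    χ.reverse.next v e = x := by
  subst h
  haveI : Nonempty E := ⟨x⟩
  exact Function.leftInverse_invFun hinj x

theorem reverse_next_spec (χ : RibbonStruct V E) {v : V}
    (hsurj : Function.Surjective (χ.next v)) (e : E) :
    χ.next v (χ.reverse.next v e) = e := by
  haveI : Nonempty E := ⟨e⟩
  exact Function.rightInverse_invFun hsurj e

theorem reverse_bijective (χ : RibbonStruct V E) {v : V}
    (hb : Function.Bijective (χ.next v)) : Function.Bijective (χ.reverse.next v) := by
  constructor
  · intro a b h
    have := congrArg (χ.next v) h
    rwa [reverse_next_spec χ hb.2, reverse_next_spec χ hb.2] at this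
  · intro b
    exact ⟨χ.next v b, reverse_next_eq χ hb.1 rfl⟩

theorem mem_reverse_next (G : Multigraph V E) (χ : RibbonStruct V E)
    (hr : χ.IsRibbon G) {v : V} {e : E} (hv : v ∈ G.ends e) :
    v ∈ G.ends (χ.reverse.next v e) := by
  classical
  set s : Finset E := univ.filter (fun x => v ∈ G.ends x) with hs
  have himg : s.image (χ.next v) ⊆ s := by
    intro y hy
    obtain ⟨x, hx, rfl⟩ := Finset.mem_image.mp hy
    simp only [hs, Finset.mem_filter, Finset.mem_univ, true_and] at hx ⊢
    exact hr.2.1 v x hx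
  have hcard : s.card ≤ (s.image (χ.next v)).card := by
    rw [Finset.card_image_of_injective _ (hr.1 v).1]
  have heq : s.image (χ.next v) = s := Finset.eq_of_subset_of_card_le himg hcard
  have he : e ∈ s := by simp [hs, hv]
  rw [← heq] at he
  obtain ⟨x, hx, hfx⟩ := Finset.mem_image.mp he
  rw [reverse_next_eq χ (hr.1 v).1 hfx]
  simpa [hs] using hx

theorem ribbon_reverse {G : Multigraph V E} {χ : RibbonStruct V E}
    (hr : χ.IsRibbon G) : χ.reverse.IsRibbon G := by
  refine ⟨fun v => reverse_bijective χ (hr.1 v), fun v e hv => mem_reverse_next G χ hr hv, ?_⟩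
  intro v e f he hf
  obtain ⟨m, hm⟩ := hr.2.2 v f e hf he
  refine ⟨m, ?_⟩
  have hli : Function.LeftInverse (χ.reverse.next v) (χ.next v) := fun x => by
    haveI : Nonempty E := ⟨x⟩
    exact reverse_next_eq χ (hr.1 v).1 rfl
  have := (hli.iterate m) f
  rwa [hm] at this

theorem sym2_other_eq {z : Sym2 V} {v x : V} (h : v ∈ z) (hz : z = s(x, v)) :
    Sym2.Mem.other h = x := by
  have hs := Sym2.eq_iff.mp ((Sym2.other_spec h).trans hz)
  rcases hs with ⟨h1, h2⟩ | ⟨_, h2⟩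
  · exact h2.trans h1
  · exact h2

def rdart (G : Multigraph V E) (d : G.Dart) : G.Dart :=
  ⟨(d.1.1, Sym2.Mem.other d.2), Sym2.other_mem d.2⟩

theorem rdart_invol (G : Multigraph V E) (d : G.Dart) : rdart G (rdart G d) = d := by
  obtain ⟨⟨e, v⟩, h⟩ := d
  apply Subtype.ext
  show (e, _) = (e, v)
  exact congrArg (Prod.mk e) (sym2_other_eq (Sym2.other_mem h) (Sym2.other_spec h).symm)

theorem faceRel_rev_of (G : Multigraph V E) (χ : RibbonStruct V E) (hr : χ.IsRibbon G)
    {a b : G.Dart} (h : G.FaceRel χ a b) :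
    G.FaceRel χ.reverse (rdart G b) (rdart G a) := by
  obtain ⟨h1, h2⟩ := h
  have hob : Sym2.Mem.other b.2 = a.1.2 := sym2_other_eq b.2 h2
  constructor
  · show a.1.1 = χ.reverse.next (Sym2.Mem.other b.2) b.1.1
    rw [hob]
    exact (reverse_next_eq χ (hr.1 a.1.2).1 h1.symm).symm
  · show G.ends a.1.1 = s(Sym2.Mem.other b.2, Sym2.Mem.other a.2)
    rw [hob]
    exact (Sym2.other_spec a.2).symm

theorem faceRel_rev_of' (G : Multigraph V E) (χ : RibbonStruct V E) (hr : χ.IsRibbon G)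
    {a b : G.Dart} (h : G.FaceRel χ.reverse a b) :
    G.FaceRel χ (rdart G b) (rdart G a) := by
  obtain ⟨h1, h2⟩ := h
  have hob : Sym2.Mem.other b.2 = a.1.2 := sym2_other_eq b.2 h2
  constructor
  · show a.1.1 = χ.next (Sym2.Mem.other b.2) b.1.1
    rw [hob, h1, reverse_next_spec χ (hr.1 a.1.2).2]
  · show G.ends a.1.1 = s(Sym2.Mem.other b.2, Sym2.Mem.other a.2)
    rw [hob]
    exact (Sym2.other_spec a.2).symm

theorem numFaces_reverse (G : Multigraph V E) (χ : RibbonStruct V E) (hr : χ.IsRibbon G) :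
    G.numFaces χ.reverse = G.numFaces χ := by
  apply Nat.card_congr
  exact {
    toFun := Quot.lift (fun d => Quot.mk (G.FaceRel χ) (rdart G d))
      (fun a b h => (Quot.sound (faceRel_rev_of' G χ hr h)).symm)
    invFun := Quot.lift (fun d => Quot.mk (G.FaceRel χ.reverse) (rdart G d))
      (fun a b h => (Quot.sound (faceRel_rev_of G χ hr h)).symm)
    left_inv := by
      apply Quot.ind
      intro d
      show Quot.mk _ (rdart G (rdart G d)) = _
      rw [rdart_invol]
    right_inv := by
      apply Quot.ind
      intro d
      show Quot.mk _ (rdart G (rdart G d)) = _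
      rw [rdart_invol] }

theorem plane_reverse {G : Multigraph V E} {χ : RibbonStruct V E} (h : G.IsPlane χ) :
    G.IsPlane χ.reverse :=
  ⟨h.1, ribbon_reverse h.2.1, by rw [numFaces_reverse G χ h.2.1]; exact h.2.2⟩

end Reverse

theorem reverse_iso {V E V' E' : Type} [Fintype V] [Fintype E] [DecidableEq V] [DecidableEq E]
    [Fintype V'] [Fintype E'] [DecidableEq V'] [DecidableEq E']
    {G : Multigraph V E} {χ : RibbonStruct V E} {G' : Multigraph V' E'}
    {χ' : RibbonStruct V' E'} {φV : V ≃ V'} {φE : E ≃ E'}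
    (hr : χ.IsRibbon G) (hr' : χ'.IsRibbon G')
    (hiso : IsRibbonIso G χ G' χ' φV φE) :
    IsRibbonIso G χ.reverse G' χ'.reverse φV φE := by
  refine ⟨hiso.1, ?_⟩
  intro v e hv
  set x := χ.reverse.next v e with hx
  have hvx : v ∈ G.ends x := mem_reverse_next G χ hr hv
  have hxe : χ.next v x = e := reverse_next_spec χ (hr.1 v).2 e
  have h2 := hiso.2 v x hvx
  rw [hxe] at h2
  exact (reverse_next_eq χ' (hr'.1 (φV v)).1 h2.symm).symm

section Pic
variable {V E : Type} [Fintype V] [Fintype E] [DecidableEq V] [DecidableEq E]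

theorem picClass_congr (G : Multigraph V E) {D D' : V → ℤ} (h : D = D')
    (hD : D ∈ Div0 V) (hD' : D' ∈ Div0 V) : G.picClass D hD = G.picClass D' hD' := by
  subst h; rfl

theorem picClass_neg (G : Multigraph V E) (D : V → ℤ) (hD : D ∈ Div0 V)
    (h' : (-D) ∈ Div0 V) : G.picClass (-D) h' = - G.picClass D hD := by
  have : (⟨-D, h'⟩ : Div0 V) = -⟨D, hD⟩ := Subtype.ext rfl
  show QuotientAddGroup.mk _ = _
  rw [this]
  rfl

theorem picClass_add (G : Multigraph V E) (D D' : V → ℤ) (hD : D ∈ Div0 V)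
    (hD' : D' ∈ Div0 V) (h2 : (D + D') ∈ Div0 V) :
    G.picClass (D + D') h2 = G.picClass D hD + G.picClass D' hD' := by
  have : (⟨D + D', h2⟩ : Div0 V) = ⟨D, hD⟩ + ⟨D', hD'⟩ := Subtype.ext rfl
  show QuotientAddGroup.mk _ = _
  rw [this]
  rfl

theorem picClass_eq_zero_iff (G : Multigraph V E) (D : V → ℤ) (hD : D ∈ Div0 V) :
    G.picClass D hD = 0 ↔ D ∈ G.LapSubgroup := by
  show (QuotientAddGroup.mk _ : Div0 V ⧸ ((G.LapSubgroup).addSubgroupOf (Div0 V))) = 0 ↔ _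
  rw [QuotientAddGroup.eq_zero_iff, AddSubgroup.mem_addSubgroupOf]

end Pic

theorem isTorsor_inv {α : AlgData} (hα : IsTorsorAlg α) : IsTorsorAlg (invAlg α) := by
  intro nV nE G χ hpl
  obtain ⟨h1, h2, h3, h4, h5, h6⟩ := hα nV nE G χ hpl
  refine ⟨fun S T hT => h1 (-S) T hT, fun T hT => by simpa [invAlg] using h2 T hT,
    ?_, ?_, ?_, ?_⟩
  · intro S S' T hT
    show α nV nE G χ (-(S + S')) T = α nV nE G χ (-S) (α nV nE G χ (-S') T)
    rw [neg_add, h3 _ _ _ hT]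
  · intro S T hT h
    have := h4 (-S) T hT h
    simpa using this
  · intro T T' hT hT'
    obtain ⟨S, hS⟩ := h5 T T' hT hT'
    exact ⟨-S, by simpa [invAlg] using hS⟩
  · intro nV' nE' G' χ' hpl' φV φE hiso D hD hD' T hT
    have hnD : (-D) ∈ Div0 (Fin nV) := neg_mem hD
    have hnD' : ((-D) ∘ φV.symm) ∈ Div0 (Fin nV') := neg_mem hD'
    have := h6 nV' nE' G' χ' hpl' φV φE hiso (-D) hnD hnD' T hT
    have eL : -(G'.picClass (D ∘ φV.symm) hD') = G'.picClass ((-D) ∘ φV.symm) hnD' := by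
      exact (picClass_neg G' (D ∘ φV.symm) hD' hnD').symm
    have eR : -(G.picClass D hD) = G.picClass (-D) hnD := (picClass_neg G D hD hnD).symm
    show α nV' nE' G' χ' (-(G'.picClass (D ∘ φV.symm) hD')) (T.image φE) =
      (α nV nE G χ (-(G.picClass D hD)) T).image φE
    rw [eL, eR]
    exact this

theorem isTorsor_rev {α : AlgData} (hα : IsTorsorAlg α) : IsTorsorAlg (revAlg α) := by
  intro nV nE G χ hpl
  have hplr := plane_reverse hpl
  obtain ⟨h1, h2, h3, h4, h5, h6⟩ := hα nV nE G χ.reverse hplr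
  refine ⟨h1, h2, h3, h4, h5, ?_⟩
  intro nV' nE' G' χ' hpl' φV φE hiso D hD hD' T hT
  exact h6 nV' nE' G' χ'.reverse (plane_reverse hpl') φV φE
    (reverse_iso hpl.2.1 hpl'.2.1 hiso) D hD hD' T hT

theorem isTorsor_revinv {α : AlgData} (hα : IsTorsorAlg α) : IsTorsorAlg (revInvAlg α) :=
  isTorsor_inv (isTorsor_rev hα)

theorem reverse_eq_self {V E : Type} [Fintype V] [Fintype E] [DecidableEq V] [DecidableEq E] (χ : RibbonStruct V E)
    (h : ∀ v e, χ.next v (χ.next v e) = e) : χ.reverse = χ := by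
  have hinj : ∀ v, Function.Injective (χ.next v) := by
    intro v a b hab
    rw [← h v a, hab, h v b]
  have hn : χ.reverse.next = χ.next :=
    funext fun v => funext fun e => reverse_next_eq χ (hinj v) (h v e)
  exact congrArg RibbonStruct.mk hn

theorem C3R_rev : C3R.reverse = C3R := reverse_eq_self C3R (by decide)

theorem E3_iso : IsRibbonIso E3G E3R.reverse E3G E3R (Equiv.swap 0 1) (Equiv.refl (Fin 3)) := by
  constructor
  · intro e
    show s(0,1) = Sym2.map (Equiv.swap 0 1) s(0,1)
    rw [Sym2.map_pair_eq, Equiv.swap_apply_left, Equiv.swap_apply_right]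
    exact Sym2.eq_swap
  · intro v e _
    have key : ∀ (v : Fin 2) (e : Fin 3), E3R.next v (E3R.next (Equiv.swap 0 1 v) e) = e := by
      decide
    exact reverse_next_eq E3R (E3_ribbon.1 v).1 (key v e)

theorem E3_bar {α : AlgData} (hα : IsTorsorAlg α) (S : E3G.Pic0) (T : Finset (Fin 3))
    (hT : E3G.IsSpanningTree T) :
    α 2 3 E3G E3R.reverse S T = α 2 3 E3G E3R (-S) T := by
  obtain ⟨_, _, _, _, _, h6⟩ := hα 2 3 E3G E3R.reverse (plane_reverse E3_plane)
  induction S using QuotientAddGroup.induction_on with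
  | H x =>
    obtain ⟨D, hD⟩ := x
    have hsum : D 0 + D 1 = 0 := by
      have h' : ∑ v, D v = 0 := hD
      rwa [Fin.sum_univ_two] at h'
    have hswap : (D ∘ (Equiv.swap (0:Fin 2) 1).symm) = -D := by
      funext v
      simp only [Function.comp_apply, Equiv.symm_swap, Pi.neg_apply]
      fin_cases v <;> simp [Equiv.swap_apply_def] <;> omega
    have hD' : (D ∘ (Equiv.swap (0:Fin 2) 1).symm) ∈ Div0 (Fin 2) := by
      rw [hswap]; exact neg_mem hD
    have h := h6 2 3 E3G E3R E3_plane (Equiv.swap 0 1) (Equiv.refl (Fin 3)) E3_iso D hD hD' T hT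
    have himg : ∀ (U : Finset (Fin 3)), U.image (Equiv.refl (Fin 3)) = U := by
      intro U; simp
    rw [himg, himg] at h
    have hcl : E3G.picClass (D ∘ (Equiv.swap (0:Fin 2) 1).symm) hD' =
        -(E3G.picClass D hD) := by
      rw [picClass_congr E3G hswap hD' (neg_mem hD)]
      exact picClass_neg E3G D hD (neg_mem hD)
    rw [hcl] at h
    exact h.symm

theorem alg_ne {α : AlgData} (hα : IsTorsorAlg α) {nV nE : ℕ}
    {G : Multigraph (Fin nV) (Fin nE)} {χ : RibbonStruct (Fin nV) (Fin nE)}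
    (hpl : G.IsPlane χ) {T : Finset (Fin nE)} (hT : G.IsSpanningTree T)
    {S : G.Pic0} (h2 : S + S ≠ 0) :
    α nV nE G χ S T ≠ α nV nE G χ (-S) T := by
  obtain ⟨_, hid, hcomp, hfree, _, _⟩ := hα nV nE G χ hpl
  intro heq
  apply h2
  apply hfree _ _ hT
  rw [hcomp S S T hT, heq, ← hcomp S (-S) T hT, add_neg_cancel, hid T hT]

def SE3 : E3G.Pic0 := E3G.picClass (chipDiv 0 1) E3_chip_mem
def SC3 : C3G.Pic0 := C3G.picClass (chipDiv 0 1) C3_chip_mem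

theorem SE3_2 : SE3 + SE3 ≠ 0 := by
  have h : SE3 + SE3 = E3G.picClass (chipDiv 0 1 + chipDiv 0 1)
      (add_mem E3_chip_mem E3_chip_mem) :=
    (picClass_add E3G _ _ E3_chip_mem E3_chip_mem _).symm
  intro h0
  rw [h] at h0
  exact E3_notlap ((picClass_eq_zero_iff _ _ _).mp h0)

theorem SC3_2 : SC3 + SC3 ≠ 0 := by
  have h : SC3 + SC3 = C3G.picClass (chipDiv 0 1 + chipDiv 0 1)
      (add_mem C3_chip_mem C3_chip_mem) :=
    (picClass_add C3G _ _ C3_chip_mem C3_chip_mem _).symm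
  intro h0
  rw [h] at h0
  exact C3_notlap ((picClass_eq_zero_iff _ _ _).mp h0)

theorem four_torsor_algorithms' (α : AlgData) (hα : IsTorsorAlg α) :
    IsTorsorAlg (revAlg α) ∧ IsTorsorAlg (invAlg α) ∧ IsTorsorAlg (revInvAlg α) ∧
    AlgNe α (revAlg α) ∧ AlgNe α (invAlg α) ∧ AlgNe α (revInvAlg α) ∧
    AlgNe (revAlg α) (invAlg α) ∧ AlgNe (revAlg α) (revInvAlg α) ∧
    AlgNe (invAlg α) (revInvAlg α) := by
  have KE : α 2 3 E3G E3R SE3 {0} ≠ α 2 3 E3G E3R (-SE3) {0} :=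
    alg_ne hα E3_plane E3_tree SE3_2
  have KC : α 3 3 C3G C3R SC3 {0,1} ≠ α 3 3 C3G C3R (-SC3) {0,1} :=
    alg_ne hα C3_plane C3_tree SC3_2
  refine ⟨isTorsor_rev hα, isTorsor_inv hα, isTorsor_revinv hα, ?_, ?_, ?_, ?_, ?_, ?_⟩
  · -- α vs ᾱ on E3
    refine ⟨2, 3, E3G, E3R, E3_plane, SE3, {0}, E3_tree, ?_⟩
    show α 2 3 E3G E3R SE3 {0} ≠ α 2 3 E3G E3R.reverse SE3 {0}
    rw [E3_bar hα SE3 {0} E3_tree]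
    exact KE
  · -- α vs α⁻¹ on C3
    exact ⟨3, 3, C3G, C3R, C3_plane, SC3, {0,1}, C3_tree, KC⟩
  · -- α vs ᾱ⁻¹ on C3
    refine ⟨3, 3, C3G, C3R, C3_plane, SC3, {0,1}, C3_tree, ?_⟩
    show α 3 3 C3G C3R SC3 {0,1} ≠ α 3 3 C3G C3R.reverse (-SC3) {0,1}
    rw [C3R_rev]
    exact KC
  · -- ᾱ vs α⁻¹ on C3
    refine ⟨3, 3, C3G, C3R, C3_plane, SC3, {0,1}, C3_tree, ?_⟩
    show α 3 3 C3G C3R.reverse SC3 {0,1} ≠ α 3 3 C3G C3R (-SC3) {0,1}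
    rw [C3R_rev]
    exact KC
  · -- ᾱ vs ᾱ⁻¹ on C3
    refine ⟨3, 3, C3G, C3R, C3_plane, SC3, {0,1}, C3_tree, ?_⟩
    show α 3 3 C3G C3R.reverse SC3 {0,1} ≠ α 3 3 C3G C3R.reverse (-SC3) {0,1}
    rw [C3R_rev]
    exact KC
  · -- α⁻¹ vs ᾱ⁻¹ on E3
    refine ⟨2, 3, E3G, E3R, E3_plane, SE3, {0}, E3_tree, ?_⟩
    show α 2 3 E3G E3R (-SE3) {0} ≠ α 2 3 E3G E3R.reverse (-SE3) {0}
    rw [E3_bar hα (-SE3) {0} E3_tree, neg_neg]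
    exact KE.symm

/-- if `α` is a sandpile torsor algorithm, then so are `ᾱ`,
`α⁻¹` and `ᾱ⁻¹`, and the four algorithms are pairwise distinct. -/
theorem four_torsor_algorithms (α : AlgData) (hα : IsTorsorAlg α) :
    IsTorsorAlg (revAlg α) ∧ IsTorsorAlg (invAlg α) ∧ IsTorsorAlg (revInvAlg α) ∧
    AlgNe α (revAlg α) ∧ AlgNe α (invAlg α) ∧ AlgNe α (revInvAlg α) ∧
    AlgNe (revAlg α) (invAlg α) ∧ AlgNe (revAlg α) (revInvAlg α) ∧
    AlgNe (invAlg α) (revInvAlg α) := by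
  exact four_torsor_algorithms' α hα

end
end
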